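/- Under homoskedastic noise (Ω_t = Ω for all t), the Total Covariance estimator Λ̂^TC = Σ̂ − (4/n)·(1−1/K)·Ω satisfies E[Λ̂^TC] = Λ_K exactly, where Σ̂ is the empirical covariance of the estimated treatment effects. -/

import Mathlib

open MeasureTheory ProbabilityTheory Finset

/-- Under homoskedastic noise (`Ω_t = Ω` for all `t`), the Total Covariance estimator
`Λ̂ᵀᶜ = Σ̂ - (4/n)(1 - 1/K) Ω` satisfies `E[Λ̂ᵀᶜ] = Λ_K` exactly. -/
theorem stmt9 {W : Type*} [MeasurableSpace W] (μ : Measure W) [IsProbabilityMeasure μ]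
    (K G n : ℕ) (hK : 0 < K) (hn : 0 < n)
    (τhat : Fin K → W → Fin G → ℝ) (τ : Fin K → Fin G → ℝ)
    (Ω : Matrix (Fin G) (Fin G) ℝ)
    (hmeas : ∀ t, Measurable (τhat t))
    (hindep : iIndepFun τhat μ)
    (hint : ∀ t t' g g', Integrable (fun ω => τhat t ω g * τhat t' ω g') μ)
    (hmean : ∀ t g, ∫ ω, τhat t ω g ∂μ = τ t g)
    (hcov : ∀ t g g',
      ∫ ω, (τhat t ω g - τ t g) * (τhat t ω g' - τ t g') ∂μ = (4 / n : ℝ) * Ω g g')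
    (ΛK : Matrix (Fin G) (Fin G) ℝ)
    (hΛK : ∀ g g', ΛK g g' =
      (1 / K : ℝ) * ∑ t, τ t g * τ t g' -
        ((1 / K : ℝ) * ∑ t, τ t g) * ((1 / K : ℝ) * ∑ t, τ t g')) :
    ∀ g g',
      ∫ ω, ((1 / K : ℝ) * ∑ t, τhat t ω g * τhat t ω g' -
          ((1 / K : ℝ) * ∑ t, τhat t ω g) * ((1 / K : ℝ) * ∑ t, τhat t ω g')
          - (4 / n : ℝ) * (1 - 1 / K : ℝ) * Ω g g') ∂μ
        = ΛK g g' := by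
  intro g g'
  set c : ℝ := 4 / n with hc
  have hmeas' : ∀ t (g : Fin G), Measurable (fun ω => τhat t ω g) :=
    fun t g => (measurable_pi_apply g).comp (hmeas t)
  -- single coordinates are integrable (from square integrability)
  have hint1 : ∀ t (g : Fin G), Integrable (fun ω => τhat t ω g) μ := by
    intro t g
    have hsq : Integrable (fun ω => τhat t ω g * τhat t ω g) μ := hint t t g g
    have h2 : Integrable (fun ω => (τhat t ω g ^ 2 + 1) / 2) μ := by
      have : Integrable (fun ω => τhat t ω g ^ 2 + 1) μ := by
        simpa [sq] using hsq.add (integrable_const (1 : ℝ))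
      exact this.div_const 2
    refine h2.mono ((hmeas' t g).aestronglyMeasurable) ?_
    filter_upwards with ω
    have h1 : |τhat t ω g| ≤ (τhat t ω g ^ 2 + 1) / 2 := by
      nlinarith [sq_nonneg (|τhat t ω g| - 1), sq_abs (τhat t ω g)]
    simp only [Real.norm_eq_abs]
    exact h1.trans (le_abs_self _)
  -- same-index second moments
  have hsame : ∀ t (g g' : Fin G),
      ∫ ω, τhat t ω g * τhat t ω g' ∂μ = τ t g * τ t g' + c * Ω g g' := by
    intro t g g'
    have h := hcov t g g'
    have hexp : (fun ω => (τhat t ω g - τ t g) * (τhat t ω g' - τ t g'))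
        = fun ω => τhat t ω g * τhat t ω g' - τ t g' * τhat t ω g
            - τ t g * τhat t ω g' + τ t g * τ t g' := by
      funext ω; ring
    have hIa : Integrable (fun ω => τhat t ω g * τhat t ω g'
        - τ t g' * τhat t ω g) μ := (hint t t g g').sub ((hint1 t g).const_mul _)
    have hIb : Integrable (fun ω => τhat t ω g * τhat t ω g'
        - τ t g' * τhat t ω g - τ t g * τhat t ω g') μ :=
      hIa.sub ((hint1 t g').const_mul _)
    rw [hexp, integral_add hIb (integrable_const _),
      integral_sub hIa ((hint1 t g').const_mul _),
      integral_sub (hint t t g g') ((hint1 t g).const_mul _),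
      integral_const_mul, integral_const_mul, integral_const, hmean, hmean] at h
    simp only [measure_univ, probReal_univ, ENNReal.toReal_one, smul_eq_mul, one_mul] at h
    linarith
  -- cross-index moments via independence
  have hcross : ∀ t t', t ≠ t' → ∀ (g g' : Fin G),
      ∫ ω, τhat t ω g * τhat t' ω g' ∂μ = τ t g * τ t' g' := by
    intro t t' htt' g g'
    have hiid : IndepFun (τhat t) (τhat t') μ := hindep.indepFun htt'
    have hind : IndepFun (fun ω => τhat t ω g) (fun ω => τhat t' ω g') μ :=
      hiid.comp (measurable_pi_apply g) (measurable_pi_apply g')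
    have := hind.integral_mul_eq_mul_integral (hint1 t g).aestronglyMeasurable (hint1 t' g').aestronglyMeasurable
    simpa [hmean, Pi.mul_apply] using this
  have hE : ∀ t t', ∫ ω, τhat t ω g * τhat t' ω g' ∂μ
      = τ t g * τ t' g' + (if t = t' then c * Ω g g' else 0) := by
    intro t t'
    by_cases h : t = t'
    · subst h; simpa using hsame t g g'
    · simp [h, hcross t t' h g g']
  -- rewrite integrand with the double sum
  have hre : (fun ω => ((1 / K : ℝ) * ∑ t, τhat t ω g * τhat t ω g' -
        ((1 / K : ℝ) * ∑ t, τhat t ω g) * ((1 / K : ℝ) * ∑ t, τhat t ω g')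
        - c * (1 - 1 / K : ℝ) * Ω g g'))
      = fun ω => (1 / K : ℝ) * ∑ t, τhat t ω g * τhat t ω g'
        - (1 / K : ℝ) * ((1 / K : ℝ) * ∑ t, ∑ t', τhat t ω g * τhat t' ω g')
        - c * (1 - 1 / K : ℝ) * Ω g g' := by
    funext ω
    rw [← Finset.sum_mul_sum Finset.univ Finset.univ
      (fun t => τhat t ω g) (fun t' => τhat t' ω g')]
    ring
  rw [hre]
  have hintS : Integrable (fun ω => ∑ t, τhat t ω g * τhat t ω g') μ :=
    integrable_finset_sum _ fun t _ => hint t t g g'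
  have hintD : Integrable (fun ω => ∑ t, ∑ t', τhat t ω g * τhat t' ω g') μ :=
    integrable_finset_sum _ fun t _ => integrable_finset_sum _ fun t' _ => hint t t' g g'
  have hI1 : Integrable (fun ω => (1 / K : ℝ) * ∑ t, τhat t ω g * τhat t ω g') μ :=
    hintS.const_mul _
  have hI2 : Integrable (fun ω => (1 / K : ℝ) *
      ((1 / K : ℝ) * ∑ t, ∑ t', τhat t ω g * τhat t' ω g')) μ :=
    (hintD.const_mul _).const_mul _
  have hI12 : Integrable (fun ω => (1 / K : ℝ) * ∑ t, τhat t ω g * τhat t ω g'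
      - (1 / K : ℝ) * ((1 / K : ℝ) * ∑ t, ∑ t', τhat t ω g * τhat t' ω g')) μ :=
    hI1.sub hI2
  have hinner : ∀ t, ∫ ω, ∑ t', τhat t ω g * τhat t' ω g' ∂μ
      = ∑ t', (τ t g * τ t' g' + (if t = t' then c * Ω g g' else 0)) := by
    intro t
    rw [integral_finset_sum _ (fun t' _ => hint t t' g g')]
    exact Finset.sum_congr rfl fun t' _ => hE t t'
  rw [integral_sub hI12 (integrable_const _), integral_sub hI1 hI2,
    integral_const_mul, integral_const_mul, integral_const_mul,
    integral_finset_sum _ (fun t _ => hint t t g g'),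
    integral_finset_sum _ (fun t _ =>
      integrable_finset_sum (Finset.univ) fun t' _ => hint t t' g g'),
    integral_const,
    show (∑ t, ∫ ω, ∑ t', τhat t ω g * τhat t' ω g' ∂μ)
      = ∑ t, ∑ t', (τ t g * τ t' g' + (if t = t' then c * Ω g g' else 0))
      from Finset.sum_congr rfl fun t _ => hinner t,
    show (∑ t, ∫ ω, τhat t ω g * τhat t ω g' ∂μ)
      = ∑ t, (τ t g * τ t g' + c * Ω g g')
      from Finset.sum_congr rfl fun t _ => hsame t g g']
  have hK0 : (K : ℝ) ≠ 0 := Nat.cast_ne_zero.mpr hK.ne'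
  have hsum1 : ∑ t : Fin K, (τ t g * τ t g' + c * Ω g g')
      = (∑ t : Fin K, τ t g * τ t g') + K * (c * Ω g g') := by
    simp [Finset.sum_add_distrib, Finset.card_univ, mul_comm]
  have hsum2 : ∑ t : Fin K, ∑ t' : Fin K,
      (τ t g * τ t' g' + (if t = t' then c * Ω g g' else 0))
      = (∑ t : Fin K, τ t g) * (∑ t' : Fin K, τ t' g') + K * (c * Ω g g') := by
    simp only [Finset.sum_add_distrib, Finset.sum_ite_eq, Finset.mem_univ, if_true]
    rw [← Finset.sum_mul_sum]
    simp [Finset.card_univ, mul_comm]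
  rw [hsum1, hsum2, hΛK]
  simp only [measure_univ, probReal_univ, ENNReal.toReal_one, smul_eq_mul, one_mul]
  field_simp
  ring
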